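/- (Fail-cover set no-miss condition) Let T be a set of fail-cover hyper-nodes partitioned into T_n (with D̃_{U,e} ≤ 0 for all e ∈ F) and T_p (with D̃_{U,e} ≥ 0 for all e ∈ F), define R_{U_i} = max_{U∈T} f_{U,1} / f_{U_i,1}, D̃_{T,e} = Σ_{U∈T_n} R_U D̃_{U,e} - Σ_{U∈T_p} R_U D̃_{U,e}, S_T = {e' ∉ F : D̃_{T,e'} D̃_{T,e} > 0 for some e ∈ F}, f_{T,0} = max_{e'∈S_T} |D̃_{T,e'}|, f_{T,1} = min_{e∈F} |D̃_{T,e}|, f_{T,g} = Σ_{U∈T} R_U f_{U,g}. Assume (i) f_{T,1} ≥ f_{T,0} and (ii) every failed link is a boundary edge of some hyper-node in T. Then for any failed link e ∈ F with f_{T,g} + (η-1)(|D̃_{T,e}| - f_{T,0}) < 0, there exists z ≥ 0 solving the alternative system for Q_m = {e}, Q_f = ∅ (with the free scalar z_* = f_{T,0}); hence e is detected by the LP-based algorithm. -/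
import Mathlib


open Matrix Finset

/-- Boundary edge set `E_U` of a hyper-node `U`. -/
def EUb {V E : Type*} [Fintype E] [DecidableEq V] (ends : E → V × V) (U : Finset V) :
    Finset E :=
  Finset.univ.filter (fun e =>
    ((ends e).1 ∈ U ∧ (ends e).2 ∉ U) ∨ ((ends e).2 ∈ U ∧ (ends e).1 ∉ U))

/-- `D̃_{U,e} = ∑_{u ∈ U} D̃_{u,e}`. -/
noncomputable def dtU {V E : Type*} (Dt : Matrix V E ℝ) (U : Finset V) (e : E) : ℝ :=
  ∑ u ∈ U, Dt u e

/-- `f_{U,1} = min_{e ∈ E_U ∩ F} |D̃_{U,e}|`. -/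
noncomputable def fU1 {V E : Type*} [Fintype E] [DecidableEq V] [DecidableEq E]
    (ends : E → V × V) (Dt : Matrix V E ℝ) (F : Finset E) (U : Finset V) : ℝ :=
  sInf ((fun e => |dtU Dt U e|) '' ↑(EUb ends U ∩ F))

/-- `R_U = (max_{U' ∈ T} f_{U',1}) / f_{U,1}`. -/
noncomputable def RT {V E : Type*} [Fintype E] [DecidableEq V] [DecidableEq E]
    (ends : E → V × V) (Dt : Matrix V E ℝ) (F : Finset E)
    (Tn Tp : Finset (Finset V)) (U : Finset V) : ℝ :=
  sSup ((fun U' => fU1 ends Dt F U') '' ↑(Tn ∪ Tp)) / fU1 ends Dt F U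

/-- `D̃_{T,e} = ∑_{U ∈ T_n} R_U D̃_{U,e} - ∑_{U ∈ T_p} R_U D̃_{U,e}`. -/
noncomputable def dtT {V E : Type*} [Fintype E] [DecidableEq V] [DecidableEq E]
    (ends : E → V × V) (Dt : Matrix V E ℝ) (F : Finset E)
    (Tn Tp : Finset (Finset V)) (e : E) : ℝ :=
  ∑ U ∈ Tn, RT ends Dt F Tn Tp U * dtU Dt U e
    - ∑ U ∈ Tp, RT ends Dt F Tn Tp U * dtU Dt U e

/-- `S_T = {e' ∉ F : ∃ e ∈ F, D̃_{T,e'} D̃_{T,e} > 0}`. -/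
def STset {V E : Type*} [Fintype E] [DecidableEq V] [DecidableEq E]
    (ends : E → V × V) (Dt : Matrix V E ℝ) (F : Finset E)
    (Tn Tp : Finset (Finset V)) : Set E :=
  {e' | e' ∉ F ∧ ∃ e ∈ F, dtT ends Dt F Tn Tp e' * dtT ends Dt F Tn Tp e > 0}

/-- `f_{T,0} = max_{e' ∈ S_T} |D̃_{T,e'}|` (equal to `0` if `S_T = ∅`). -/
noncomputable def fT0 {V E : Type*} [Fintype E] [DecidableEq V] [DecidableEq E]
    (ends : E → V × V) (Dt : Matrix V E ℝ) (F : Finset E)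
    (Tn Tp : Finset (Finset V)) : ℝ :=
  sSup ((fun e' => |dtT ends Dt F Tn Tp e'|) '' STset ends Dt F Tn Tp)

/-- `f_{T,1} = min_{e ∈ F} |D̃_{T,e}|`. -/
noncomputable def fT1 {V E : Type*} [Fintype E] [DecidableEq V] [DecidableEq E]
    (ends : E → V × V) (Dt : Matrix V E ℝ) (F : Finset E)
    (Tn Tp : Finset (Finset V)) : ℝ :=
  sInf ((fun e => |dtT ends Dt F Tn Tp e|) '' ↑F)

/-- `f_{U,g}`: sum of `g_{D,u}` over `U` if some failed boundary edge has
`D̃_{U,l} < 0`, else the sum of `g_{D,-u}`. -/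
noncomputable def fUg {V E : Type*} [Fintype E] [DecidableEq V] [DecidableEq E]
    (ends : E → V × V) (Dt : Matrix V E ℝ) (F : Finset E)
    (gD gDm : V → ℝ) (U : Finset V) : ℝ :=
  if ((EUb ends U ∩ F).filter (fun l => dtU Dt U l < 0)).Nonempty then
    ∑ u ∈ U, gD u
  else ∑ u ∈ U, gDm u

/-- `f_{T,g} = ∑_{U ∈ T} R_U f_{U,g}`. -/
noncomputable def fTg {V E : Type*} [Fintype E] [DecidableEq V] [DecidableEq E]
    (ends : E → V × V) (Dt : Matrix V E ℝ) (F : Finset E)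
    (gD gDm : V → ℝ) (Tn Tp : Finset (Finset V)) : ℝ :=
  ∑ U ∈ Tn ∪ Tp, RT ends Dt F Tn Tp U * fUg ends Dt F gD gDm U


private lemma swap_sum' {V : Type*} [Fintype V] [DecidableEq V] (S : Finset (Finset V))
    (r : Finset V → ℝ) (c : V → ℝ) :
    ∑ u, c u * ∑ U ∈ S, (if u ∈ U then r U else 0) = ∑ U ∈ S, r U * ∑ u ∈ U, c u := by
  simp_rw [Finset.mul_sum, mul_ite, mul_zero]
  rw [Finset.sum_comm]
  refine Finset.sum_congr rfl fun U _ => ?_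
  rw [Finset.sum_ite_mem, Finset.univ_inter]
  exact Finset.sum_congr rfl fun u _ => mul_comm _ _

/-- Fail-cover set no-miss condition. -/
theorem stmt12 {V E : Type*} [Fintype V] [DecidableEq V] [Fintype E] [DecidableEq E]
    (ends : E → V × V) (Dt : Matrix V E ℝ)
    (hD0 : ∀ u e, u ≠ (ends e).1 → u ≠ (ends e).2 → Dt u e = 0)
    (hskew : ∀ e, Dt (ends e).1 e = - Dt (ends e).2 e)
    (F : Finset E) (hFne : F.Nonempty) (gD gDm : V → ℝ) (η : ℝ) (hη : 0 < η ∧ η < 1)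
    (Tn Tp : Finset (Finset V)) (hdisj : Disjoint Tn Tp)
    (hfailcover : ∀ U ∈ Tn ∪ Tp, (EUb ends U ∩ F).Nonempty ∧
      ∀ e ∈ EUb ends U ∩ F, ∀ l ∈ EUb ends U ∩ F, dtU Dt U e * dtU Dt U l > 0)
    (hTn : ∀ U ∈ Tn, ∀ e ∈ F, dtU Dt U e ≤ 0)
    (hTp : ∀ U ∈ Tp, ∀ e ∈ F, 0 ≤ dtU Dt U e)
    (hcond_i : fT1 ends Dt F Tn Tp ≥ fT0 ends Dt F Tn Tp)
    (hcond_ii : ∀ e ∈ F, ∃ U ∈ Tn ∪ Tp, e ∈ EUb ends U)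
    (e : E) (heF : e ∈ F)
    (hcond3 : fTg ends Dt F gD gDm Tn Tp
        + (η - 1) * (|dtT ends Dt F Tn Tp e| - fT0 ends Dt F Tn Tp) < 0) :
    ∃ (zD zDm : V → ℝ) (zxm zxp : E → ℝ) (zw zs : ℝ),
      (∀ u, 0 ≤ zD u) ∧ (∀ u, 0 ≤ zDm u) ∧ (∀ e', 0 ≤ zxm e') ∧ (∀ e', 0 ≤ zxp e') ∧
      0 ≤ zw ∧ 0 ≤ zs ∧
      (∀ e', (∑ u, Dt u e' * (zD u - zDm u)) + (zxp e' - zxm e')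
          + (if e' = e then zw else 0) + zs = 0) ∧
      ((∑ u, (gD u * zD u + gDm u * zDm u))
        + (∑ e', (zxp e' * (1 - (if e' ∈ F then (1 : ℝ) else 0))
            + zxm e' * (if e' ∈ F then (1 : ℝ) else 0)))
        + (η - 1) * zw < 0) := by

  obtain ⟨hη0, hη1⟩ := hη
  -- notation
  set R := RT ends Dt F Tn Tp with hR
  set dT := dtT ends Dt F Tn Tp with hdT
  set f0 := fT0 ends Dt F Tn Tp with hf0def
  set f1 := fT1 ends Dt F Tn Tp with hf1def
  -- R_U positive
  have hdtUne : ∀ U ∈ Tn ∪ Tp, ∀ l ∈ EUb ends U ∩ F, dtU Dt U l ≠ 0 := by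
    intro U hU l hl
    have := (hfailcover U hU).2 l hl l hl
    intro h; rw [h] at this; simp at this
  have hRpos : ∀ U ∈ Tn ∪ Tp, 0 < R U := by
    intro U hU
    obtain ⟨hne, hsign⟩ := hfailcover U hU
    have hfin : ((fun e => |dtU Dt U e|) '' ↑(EUb ends U ∩ F)).Finite :=
      ((EUb ends U ∩ F).finite_toSet).image _
    obtain ⟨e0, he0⟩ := hne
    have hne' : ((fun e => |dtU Dt U e|) '' ↑(EUb ends U ∩ F)).Nonempty :=
      ⟨_, Set.mem_image_of_mem _ (by exact_mod_cast he0)⟩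
    obtain ⟨e1, he1, heq⟩ := hne'.csInf_mem hfin
    have he1' : e1 ∈ EUb ends U ∩ F := by exact_mod_cast he1
    have hpos : 0 < fU1 ends Dt F U := by
      rw [fU1, ← heq]
      exact abs_pos.mpr (hdtUne U hU e1 he1')
    have hbdd : BddAbove ((fun U' => fU1 ends Dt F U') '' ↑(Tn ∪ Tp)) :=
      (((Tn ∪ Tp).finite_toSet).image _).bddAbove
    have hle : fU1 ends Dt F U ≤ sSup ((fun U' => fU1 ends Dt F U') '' ↑(Tn ∪ Tp)) :=
      le_csSup hbdd ⟨U, by exact_mod_cast hU, rfl⟩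
    exact div_pos (lt_of_lt_of_le hpos hle) hpos
  -- dT nonpositive / negative on F
  have hdTnonpos : ∀ l ∈ F, dT l ≤ 0 := by
    intro l hl
    have hA : ∑ U ∈ Tn, R U * dtU Dt U l ≤ 0 :=
      Finset.sum_nonpos fun U hU =>
        mul_nonpos_of_nonneg_of_nonpos (hRpos U (Finset.mem_union_left _ hU)).le (hTn U hU l hl)
    have hB : 0 ≤ ∑ U ∈ Tp, R U * dtU Dt U l :=
      Finset.sum_nonneg fun U hU =>
        mul_nonneg (hRpos U (Finset.mem_union_right _ hU)).le (hTp U hU l hl)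
    rw [hdT, dtT]; rw [← hR]; linarith
  have hdTneg : ∀ l ∈ F, dT l < 0 := by
    intro l hl
    obtain ⟨U, hU, hUb⟩ := hcond_ii l hl
    have hlb : l ∈ EUb ends U ∩ F := Finset.mem_inter.mpr ⟨hUb, hl⟩
    have hne0 := hdtUne U hU l hlb
    rcases Finset.mem_union.mp hU with hUn | hUp
    · have hlt : R U * dtU Dt U l < 0 :=
        mul_neg_of_pos_of_neg (hRpos U hU) (lt_of_le_of_ne (hTn U hUn l hl) hne0)
      have hA : ∑ U' ∈ Tn.erase U, R U' * dtU Dt U' l ≤ 0 :=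
        Finset.sum_nonpos fun U' hU' =>
          mul_nonpos_of_nonneg_of_nonpos
            (hRpos U' (Finset.mem_union_left _ (Finset.mem_of_mem_erase hU'))).le
            (hTn U' (Finset.mem_of_mem_erase hU') l hl)
      have hB : 0 ≤ ∑ U' ∈ Tp, R U' * dtU Dt U' l :=
        Finset.sum_nonneg fun U' hU' =>
          mul_nonneg (hRpos U' (Finset.mem_union_right _ hU')).le (hTp U' hU' l hl)
      have hsplit : R U * dtU Dt U l + ∑ x ∈ Tn.erase U, R x * dtU Dt x l
          = ∑ x ∈ Tn, R x * dtU Dt x l :=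
        Finset.add_sum_erase Tn (fun U' => R U' * dtU Dt U' l) hUn
      rw [hdT, dtT]; rw [← hR, ← hsplit]; linarith
    · have hlt : 0 < R U * dtU Dt U l :=
        mul_pos (hRpos U hU) (lt_of_le_of_ne (hTp U hUp l hl) (Ne.symm hne0))
      have hA : ∑ U' ∈ Tn, R U' * dtU Dt U' l ≤ 0 :=
        Finset.sum_nonpos fun U' hU' =>
          mul_nonpos_of_nonneg_of_nonpos (hRpos U' (Finset.mem_union_left _ hU')).le
            (hTn U' hU' l hl)
      have hB : 0 ≤ ∑ U' ∈ Tp.erase U, R U' * dtU Dt U' l :=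
        Finset.sum_nonneg fun U' hU' =>
          mul_nonneg (hRpos U' (Finset.mem_union_right _ (Finset.mem_of_mem_erase hU'))).le
            (hTp U' (Finset.mem_of_mem_erase hU') l hl)
      have hsplit : R U * dtU Dt U l + ∑ x ∈ Tp.erase U, R x * dtU Dt x l
          = ∑ x ∈ Tp, R x * dtU Dt x l :=
        Finset.add_sum_erase Tp (fun U' => R U' * dtU Dt U' l) hUp
      rw [hdT, dtT]; rw [← hR, ← hsplit]; linarith
  -- f0 nonneg
  have hf0nn : 0 ≤ f0 := Real.sSup_nonneg (by rintro x ⟨e', -, rfl⟩; exact abs_nonneg _)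
  -- bound on S_T
  have hSTle : ∀ e' ∈ STset ends Dt F Tn Tp, |dT e'| ≤ f0 := by
    intro e' h
    exact le_csSup (((Set.toFinite (STset ends Dt F Tn Tp)).image _).bddAbove)
      (Set.mem_image_of_mem _ h)
  -- f1 lower bound on F
  have hf1le : ∀ l ∈ F, f1 ≤ |dT l| := by
    intro l hl
    exact csInf_le ⟨0, by rintro x ⟨a, _, rfl⟩; exact abs_nonneg _⟩
      ⟨l, by exact_mod_cast hl, rfl⟩
  -- off-F bound
  have hoffF : ∀ e', e' ∉ F → -f0 ≤ dT e' := by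
    intro e' hn
    by_cases hS : e' ∈ STset ends Dt F Tn Tp
    · have := hSTle e' hS
      have := neg_abs_le (dT e')
      linarith
    · have hnn : 0 ≤ dT e' := by
        by_contra hlt
        push_neg at hlt
        exact hS ⟨hn, e, heF, mul_pos_of_neg_of_neg hlt (hdTneg e heF)⟩
      linarith
  have hzwnn : ∀ l ∈ F, 0 ≤ |dT l| - f0 := fun l hl => by
    have := hf1le l hl; linarith [hcond_i]
  refine ⟨fun v => ∑ U ∈ Tn, (if v ∈ U then R U else 0),
      fun v => ∑ U ∈ Tp, (if v ∈ U then R U else 0),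
      fun l => if l ∈ F then 0 else dT l + f0,
      fun l => if l ∈ F ∧ l ≠ e then |dT l| - f0 else 0,
      |dT e| - f0, f0, ?_, ?_, ?_, ?_, hzwnn e heF, hf0nn, ?_, ?_⟩
  · intro v
    refine Finset.sum_nonneg fun U hU => ?_
    split
    · exact (hRpos U (Finset.mem_union_left _ hU)).le
    · exact le_refl 0
  · intro v
    refine Finset.sum_nonneg fun U hU => ?_
    split
    · exact (hRpos U (Finset.mem_union_right _ hU)).le
    · exact le_refl 0
  · intro l
    show 0 ≤ if l ∈ F then 0 else dT l + f0
    split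
    · exact le_refl 0
    · next h => have := hoffF l h; linarith
  · intro l
    show 0 ≤ if l ∈ F ∧ l ≠ e then |dT l| - f0 else 0
    split
    · next h => exact hzwnn l h.1
    · exact le_refl 0
  · -- balance constraints
    intro l
    have hkey : (∑ u, Dt u l * ((∑ U ∈ Tn, (if u ∈ U then R U else 0))
        - ∑ U ∈ Tp, (if u ∈ U then R U else 0))) = dT l := by
      simp_rw [mul_sub]
      rw [Finset.sum_sub_distrib, swap_sum', swap_sum']
      rw [hdT, dtT]; rw [← hR]
      congr 1
    show (∑ u, Dt u l * ((∑ U ∈ Tn, if u ∈ U then R U else 0)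
        - ∑ U ∈ Tp, if u ∈ U then R U else 0))
      + ((if l ∈ F ∧ l ≠ e then |dT l| - f0 else 0) - if l ∈ F then 0 else dT l + f0)
      + (if l = e then |dT e| - f0 else 0) + f0 = 0
    rw [hkey]
    by_cases hle : l = e
    · have h1 : (if l ∈ F ∧ l ≠ e then |dT l| - f0 else 0) = 0 := by simp [hle]
      have h2 : (if l ∈ F then (0:ℝ) else dT l + f0) = 0 := if_pos (hle ▸ heF)
      have h3 : (if l = e then |dT e| - f0 else 0) = |dT e| - f0 := if_pos hle
      rw [h1, h2, h3, hle]
      have := abs_of_nonpos (hdTnonpos e heF)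
      linarith
    · by_cases hlF : l ∈ F
      · have h1 : (if l ∈ F ∧ l ≠ e then |dT l| - f0 else 0) = |dT l| - f0 :=
          if_pos ⟨hlF, hle⟩
        have h2 : (if l ∈ F then (0:ℝ) else dT l + f0) = 0 := if_pos hlF
        have h3 : (if l = e then |dT e| - f0 else 0) = 0 := if_neg hle
        rw [h1, h2, h3]
        have := abs_of_nonpos (hdTnonpos l hlF)
        linarith
      · have h1 : (if l ∈ F ∧ l ≠ e then |dT l| - f0 else 0) = 0 :=
          if_neg (fun h => hlF h.1)
        have h2 : (if l ∈ F then (0:ℝ) else dT l + f0) = dT l + f0 := if_neg hlF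
        have h3 : (if l = e then |dT e| - f0 else 0) = 0 := if_neg hle
        rw [h1, h2, h3]
        ring
  · -- objective
    have h1 : (∑ u, (gD u * ∑ U ∈ Tn, (if u ∈ U then R U else 0)
        + gDm u * ∑ U ∈ Tp, (if u ∈ U then R U else 0)))
        = fTg ends Dt F gD gDm Tn Tp := by
      rw [Finset.sum_add_distrib, swap_sum', swap_sum', fTg, Finset.sum_union hdisj, ← hR]
      congr 1
      · refine Finset.sum_congr rfl fun U hU => ?_
        congr 1
        rw [fUg, if_pos]
        obtain ⟨e0, he0⟩ := (hfailcover U (Finset.mem_union_left _ hU)).1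
        refine ⟨e0, Finset.mem_filter.mpr ⟨he0, ?_⟩⟩
        exact lt_of_le_of_ne (hTn U hU e0 (Finset.mem_inter.mp he0).2)
          (hdtUne U (Finset.mem_union_left _ hU) e0 he0)
      · refine Finset.sum_congr rfl fun U hU => ?_
        congr 1
        rw [fUg, if_neg]
        rintro ⟨l, hl⟩
        obtain ⟨hl1, hl2⟩ := Finset.mem_filter.mp hl
        exact absurd (hTp U hU l (Finset.mem_inter.mp hl1).2) (not_le.mpr hl2)
    have h2 : (∑ e', ((if e' ∈ F ∧ e' ≠ e then |dT e'| - f0 else 0)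
          * (1 - (if e' ∈ F then (1 : ℝ) else 0))
        + (if e' ∈ F then 0 else dT e' + f0) * (if e' ∈ F then (1 : ℝ) else 0))) = 0 := by
      refine Finset.sum_eq_zero fun e' _ => ?_
      by_cases hF : e' ∈ F
      · rw [if_pos hF, if_pos hF]
        split <;> ring
      · rw [if_neg (fun h => hF h.1), if_neg hF, if_neg hF]
        ring
    show (∑ u, (gD u * ∑ U ∈ Tn, (if u ∈ U then R U else 0)
        + gDm u * ∑ U ∈ Tp, (if u ∈ U then R U else 0)))
      + (∑ e', ((if e' ∈ F ∧ e' ≠ e then |dT e'| - f0 else 0)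
          * (1 - (if e' ∈ F then (1 : ℝ) else 0))
        + (if e' ∈ F then 0 else dT e' + f0) * (if e' ∈ F then (1 : ℝ) else 0)))
      + (η - 1) * (|dT e| - f0) < 0
    rw [h1, h2]
    linarith [hcond3]
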